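/- The WSPD-based graph G is an f-faulty-degree (1+ε)-spanner for S with at most (2f+1)²·m edges: for every set F of edges of G whose maximum degree is at most f, and for all points p, q ∈ S, the shortest-path distance between p and q in G \ F is at most (1+ε) times the shortest-path distance between p and q in K_S \ F. -/

import Mathlib

open Real

/-- Length of a walk in a graph whose vertices lie in a metric space:
the sum of the metric distances of consecutive vertices. -/
noncomputable def wlen {V : Type*} [PseudoMetricSpace V] {G : SimpleGraph V} {u v : V}
    (w : G.Walk u v) : ℝ :=
  (w.darts.map fun d : G.Dart => dist d.toProd.1 d.toProd.2).sum

/-- Shortest-path distance between two vertices of a metrically weighted graph. -/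
noncomputable def gdist {V : Type*} [PseudoMetricSpace V] (G : SimpleGraph V) (p q : V) : ℝ :=
  sInf {l : ℝ | ∃ w : G.Walk p q, wlen w = l}

/-- The set `F` of edges, viewed as a graph, has maximum degree at most `f`. -/
def maxDegLe {V : Type*} (F : Set (Sym2 V)) (f : ℕ) : Prop :=
  ∀ v : V, {e | e ∈ F ∧ v ∈ e}.encard ≤ (f : ℕ∞)

section helpers
variable {V : Type*} [PseudoMetricSpace V] {G : SimpleGraph V} {p q a u v : V}

lemma wlen_nonneg (w : G.Walk p q) : 0 ≤ wlen w := by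
  apply List.sum_nonneg
  intro x hx
  simp only [List.mem_map] at hx
  obtain ⟨d, -, rfl⟩ := hx
  exact dist_nonneg

lemma wlen_nil : wlen (SimpleGraph.Walk.nil : G.Walk p p) = 0 := by simp [wlen]

lemma wlen_cons (h : G.Adj p a) (w : G.Walk a q) :
    wlen (SimpleGraph.Walk.cons h w) = dist p a + wlen w := by simp [wlen]

lemma wlen_append (w1 : G.Walk p a) (w2 : G.Walk a q) :
    wlen (w1.append w2) = wlen w1 + wlen w2 := by
  simp [wlen, SimpleGraph.Walk.darts_append]

lemma gdist_bddBelow : BddBelow {l : ℝ | ∃ w : G.Walk p q, wlen w = l} := by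
  refine ⟨0, ?_⟩
  rintro l ⟨w, rfl⟩
  exact wlen_nonneg w

lemma gdist_le_wlen (w : G.Walk p q) : gdist G p q ≤ wlen w :=
  csInf_le gdist_bddBelow ⟨w, rfl⟩

lemma gdist_nonneg' : 0 ≤ gdist G p q := by
  apply Real.sInf_nonneg
  rintro l ⟨w, rfl⟩
  exact wlen_nonneg w

lemma gdist_self_le : gdist G p p ≤ 0 := by
  simpa [wlen_nil] using gdist_le_wlen (SimpleGraph.Walk.nil : G.Walk p p)

lemma gdist_le_dist_of_adj (h : G.Adj p q) : gdist G p q ≤ dist p q := by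
  simpa [wlen_cons, wlen_nil] using gdist_le_wlen (SimpleGraph.Walk.cons h SimpleGraph.Walk.nil)

lemma gdist_triangle (hpa : G.Reachable p a) (haq : G.Reachable a q) :
    gdist G p q ≤ gdist G p a + gdist G a q := by
  obtain ⟨w1⟩ := hpa
  obtain ⟨w2⟩ := haq
  have key : ∀ l1 ∈ {l : ℝ | ∃ w : G.Walk p a, wlen w = l},
      ∀ l2 ∈ {l : ℝ | ∃ w : G.Walk a q, wlen w = l}, gdist G p q ≤ l1 + l2 := by
    rintro l1 ⟨u1, rfl⟩ l2 ⟨u2, rfl⟩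
    simpa [wlen_append] using gdist_le_wlen (u1.append u2)
  have h2 : ∀ l1 ∈ {l : ℝ | ∃ w : G.Walk p a, wlen w = l},
      gdist G p q - gdist G a q ≤ l1 := by
    intro l1 h1
    have : gdist G p q - l1 ≤ gdist G a q :=
      le_csInf ⟨_, w2, rfl⟩ (fun l2 hl2 => by linarith [key l1 h1 l2 hl2])
    linarith
  have := le_csInf (s := {l : ℝ | ∃ w : G.Walk p a, wlen w = l})
    ⟨_, w1, rfl⟩ h2
  have hpa' : gdist G p q - gdist G a q ≤ gdist G p a := this
  linarith

end helpers


section comb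
variable {V : Type*} [Finite V] {f : ℕ} {F : Set (Sym2 V)}

lemma bad_encard (hF : maxDegLe F f) (v : V) : {x : V | s(v,x) ∈ F}.encard ≤ (f : ℕ∞) := by
  have hinj : Set.InjOn (fun x => s(v,x)) {x : V | s(v,x) ∈ F} := by
    intro x hx y hy h
    simpa using (Sym2.congr_right (a := v)).mp h
  calc {x : V | s(v,x) ∈ F}.encard
      = ((fun x => s(v,x)) '' {x : V | s(v,x) ∈ F}).encard := (hinj.encard_image).symm
    _ ≤ {e | e ∈ F ∧ v ∈ e}.encard := by
        apply Set.encard_le_encard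
        rintro _ ⟨x, hx, rfl⟩
        exact ⟨hx, Sym2.mem_mk_left v x⟩
    _ ≤ (f : ℕ∞) := hF v

lemma pick_avoid (S T1 T2 : Set V) (hS : 2 * f + 1 ≤ S.ncard)
    (h1 : T1.encard ≤ (f : ℕ∞)) (h2 : T2.encard ≤ (f : ℕ∞)) :
    ∃ x ∈ S, x ∉ T1 ∧ x ∉ T2 := by
  by_contra h
  push_neg at h
  have hsub : S ⊆ T1 ∪ T2 := by
    intro x hx
    by_cases h1' : x ∈ T1
    · exact Or.inl h1'
    · exact Or.inr (h x hx h1')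
  have hc : S.encard ≤ (f : ℕ∞) + (f : ℕ∞) :=
    le_trans (Set.encard_le_encard hsub) (le_trans (Set.encard_union_le _ _) (add_le_add h1 h2))
  have hc2 : ((2 * f + 1 : ℕ) : ℕ∞) ≤ ((f + f : ℕ) : ℕ∞) := by
    calc ((2 * f + 1 : ℕ) : ℕ∞) ≤ S.encard := by
          rw [← (Set.toFinite S).cast_ncard_eq]
          exact_mod_cast hS
      _ ≤ _ := by push_cast; exact hc
  have := Nat.cast_le.mp hc2
  omega

lemma select (hF : maxDegLe F f) (p q : V) (hpq : s(p,q) ∉ F)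
    (SA SB SA' SB' : Set V) (hA : SA' ⊆ SA) (hB : SB' ⊆ SB)
    (hpA : p ∈ SA) (hqB : q ∈ SB)
    (hcA : SA'.ncard = min SA.ncard (2*f+1)) (hcB : SB'.ncard = min SB.ncard (2*f+1)) :
    ∃ a ∈ SA', ∃ b ∈ SB', (a = p ∨ s(p,a) ∉ F) ∧ (b = q ∨ s(q,b) ∉ F) ∧ s(a,b) ∉ F := by
  have hAc : SA' = SA ∨ SA'.ncard = 2*f+1 := by
    rcases le_or_gt SA.ncard (2*f+1) with h | h
    · left
      exact Set.eq_of_subset_of_ncard_le hA (by omega : SA.ncard ≤ SA'.ncard) (Set.toFinite _)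
    · right; omega
  have hBc : SB' = SB ∨ SB'.ncard = 2*f+1 := by
    rcases le_or_gt SB.ncard (2*f+1) with h | h
    · left
      exact Set.eq_of_subset_of_ncard_le hB (by omega : SB.ncard ≤ SB'.ncard) (Set.toFinite _)
    · right; omega
  rcases hAc with hAeq | hAbig
  · -- a := p
    rcases hBc with hBeq | hBbig
    · exact ⟨p, hAeq ▸ hpA, q, hBeq ▸ hqB, Or.inl rfl, Or.inl rfl, hpq⟩
    · obtain ⟨b, hbB, hb1, hb2⟩ := pick_avoid SB' {x | s(q,x) ∈ F} {x | s(p,x) ∈ F}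
        (le_of_eq hBbig.symm) (bad_encard hF q) (bad_encard hF p)
      exact ⟨p, hAeq ▸ hpA, b, hbB, Or.inl rfl, Or.inr hb1, hb2⟩
  · rcases hBc with hBeq | hBbig
    · obtain ⟨a, haA, ha1, ha2⟩ := pick_avoid SA' {x | s(p,x) ∈ F} {x | s(q,x) ∈ F}
        (le_of_eq hAbig.symm) (bad_encard hF p) (bad_encard hF q)
      refine ⟨a, haA, q, hBeq ▸ hqB, Or.inr ha1, Or.inl rfl, ?_⟩
      rw [Sym2.eq_swap]; exact ha2
    · obtain ⟨a, haA, ha1, -⟩ := pick_avoid SA' {x | s(p,x) ∈ F} ∅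
        (le_of_eq hAbig.symm) (bad_encard hF p) (by simp)
      obtain ⟨b, hbB, hb1, hb2⟩ := pick_avoid SB' {x | s(q,x) ∈ F} {x | s(a,x) ∈ F}
        (le_of_eq hBbig.symm) (bad_encard hF q) (bad_encard hF a)
      exact ⟨a, haA, b, hbB, Or.inr ha1, Or.inr hb1, hb2⟩
end comb

section core
variable {V : Type*} [Fintype V] [MetricSpace V]

lemma core_step {f : ℕ} {ε : ℝ} (hε : 0 < ε)
    {F : Set (Sym2 V)} (hF : maxDegLe F f)
    {H : SimpleGraph V} {p q : V} (hpq : p ≠ q) (hpqF : s(p,q) ∉ F)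
    {SA SB SA' SB' : Set V} (hA : SA' ⊆ SA) (hB : SB' ⊆ SB)
    (hpA : p ∈ SA) (hqB : q ∈ SB)
    (hcA : SA'.ncard = min SA.ncard (2*f+1)) (hcB : SB'.ncard = min SB.ncard (2*f+1))
    (hws' : ∀ x ∈ SA, ∀ y ∈ SB, (2+4/ε) * max (Metric.diam SA) (Metric.diam SB) ≤ dist x y)
    (hadj : ∀ a ∈ SA', ∀ b ∈ SB', a ≠ b → s(a,b) ∉ F → H.Adj a b)
    (IH : ∀ x y : V, x ≠ y → s(x,y) ∉ F → dist x y < dist p q →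
      H.Reachable x y ∧ gdist H x y ≤ (1+ε) * dist x y) :
    H.Reachable p q ∧ gdist H p q ≤ (1+ε) * dist p q := by
  obtain ⟨a, haA, b, hbB, hpa, hqb, habF⟩ :=
    select hF p q hpqF SA SB SA' SB' hA hB hpA hqB hcA hcB
  set D := max (Metric.diam SA) (Metric.diam SB) with hDdef
  have hD0 : 0 ≤ D := le_trans Metric.diam_nonneg (le_max_left _ _)
  have hd : 0 < dist p q := dist_pos.mpr hpq
  have hdD : (2+4/ε) * D ≤ dist p q := hws' p hpA q hqB
  have hc : (0:ℝ) < 2+4/ε := by positivity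
  have key : (2*ε+4) * D ≤ ε * dist p q := by
    have e1 : ε * ((2+4/ε)*D) = (2*ε+4)*D := by field_simp; try ring
    calc (2*ε+4)*D = ε * ((2+4/ε)*D) := e1.symm
      _ ≤ ε * dist p q := mul_le_mul_of_nonneg_left hdD hε.le
  have hdpa : dist p a ≤ D := le_trans
    (Metric.dist_le_diam_of_mem (Set.toFinite SA).isBounded hpA (hA haA)) (le_max_left _ _)
  have hdbq : dist b q ≤ D := le_trans
    (Metric.dist_le_diam_of_mem (Set.toFinite SB).isBounded (hB hbB) hqB) (le_max_right _ _)
  have hab : a ≠ b := by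
    intro h
    have h1 : dist p q ≤ dist p a + dist b q := by
      calc dist p q ≤ dist p a + dist a q := dist_triangle _ _ _
        _ = dist p a + dist b q := by rw [h]
    have h2 : (2+4/ε) * D ≤ dist a b := hws' a (hA haA) b (hB hbB)
    have h3 : dist a b = 0 := by rw [h, dist_self]
    nlinarith
  have hDd : D < dist p q := by nlinarith
  have hadj' : H.Adj a b := hadj a haA b hbB hab habF
  -- segment p → a
  have seg1 : H.Reachable p a ∧ gdist H p a ≤ (1+ε) * dist p a := by
    rcases hpa with rfl | hpaF
    · exact ⟨SimpleGraph.Reachable.refl _, by simpa using gdist_self_le⟩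
    · rcases eq_or_ne p a with rfl | hne
      · exact ⟨SimpleGraph.Reachable.refl _, by simpa using gdist_self_le⟩
      · exact IH p a hne hpaF (lt_of_le_of_lt hdpa hDd)
  -- segment b → q
  have seg3 : H.Reachable b q ∧ gdist H b q ≤ (1+ε) * dist b q := by
    rcases hqb with rfl | hqbF
    · exact ⟨SimpleGraph.Reachable.refl _, by simpa using gdist_self_le⟩
    · rcases eq_or_ne b q with rfl | hne
      · exact ⟨SimpleGraph.Reachable.refl _, by simpa using gdist_self_le⟩
      · refine IH b q hne ?_ (lt_of_le_of_lt hdbq hDd)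
        rw [Sym2.eq_swap]; exact hqbF
  have hr : H.Reachable p q := seg1.1.trans (hadj'.reachable.trans seg3.1)
  refine ⟨hr, ?_⟩
  have t1 : gdist H p q ≤ gdist H p a + gdist H a q :=
    gdist_triangle seg1.1 (hadj'.reachable.trans seg3.1)
  have t2 : gdist H a q ≤ gdist H a b + gdist H b q :=
    gdist_triangle hadj'.reachable seg3.1
  have gab : gdist H a b ≤ dist a b := gdist_le_dist_of_adj hadj'
  have hdab : dist a b ≤ dist p a + dist p q + dist b q := by
    calc dist a b ≤ dist a p + dist p q + dist q b := dist_triangle4 _ _ _ _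
      _ = dist p a + dist p q + dist b q := by rw [dist_comm a p, dist_comm q b]
  have hsum : dist p a + dist b q ≤ 2 * D := by linarith
  have h2' : (2+ε) * (dist p a + dist b q) ≤ (2+ε) * (2*D) :=
    mul_le_mul_of_nonneg_left hsum (by linarith)
  nlinarith [seg1.2, seg3.2, dist_nonneg (x := p) (y := a), dist_nonneg (x := b) (y := q)]
end core

lemma ncard_iUnion_le' {α ι : Type*} [Fintype ι] [Finite α] (t : ι → Set α) :
    (⋃ i, t i).ncard ≤ ∑ i, (t i).ncard := by
  classical
  have h : ∀ s : Finset ι, (⋃ i ∈ s, t i).ncard ≤ ∑ i ∈ s, (t i).ncard := by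
    intro s
    induction s using Finset.induction_on with
    | empty => simp
    | insert _ _ hx ih =>
      rename_i a s'
      rw [Finset.set_biUnion_insert, Finset.sum_insert hx]
      exact le_trans (Set.ncard_union_le _ _) (by omega)
  simpa using h Finset.univ

lemma ncard_prod' {α β : Type*} (s : Set α) (t : Set β) :
    (s ×ˢ t).ncard = s.ncard * t.ncard := by
  rw [← Nat.card_coe_set_eq, ← Nat.card_coe_set_eq, ← Nat.card_coe_set_eq,
    ← Nat.card_prod]
  exact Nat.card_congr (Equiv.Set.prod s t)

theorem stmt9 {V : Type*} [Fintype V] [MetricSpace V] (f m : ℕ) (ε : ℝ)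
    (hf : 1 ≤ f) (hε : 0 < ε)
    -- a WSPD of size m with separation ratio c = 2 + 4/ε
    (A B : Fin m → Set V)
    (hAne : ∀ i, (A i).Nonempty) (hBne : ∀ i, (B i).Nonempty)
    (hws : ∀ i, ∀ x ∈ A i, ∀ y ∈ B i,
      (2 + 4 / ε) * max (Metric.diam (A i)) (Metric.diam (B i)) ≤ dist x y)
    (hsep : ∀ p q : V, p ≠ q →
      ∃! i : Fin m, (p ∈ A i ∧ q ∈ B i) ∨ (p ∈ B i ∧ q ∈ A i))
    -- the chosen subsets A'_i and B'_i
    (A' B' : Fin m → Set V)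
    (hA'sub : ∀ i, A' i ⊆ A i) (hB'sub : ∀ i, B' i ⊆ B i)
    (hA'card : ∀ i, (A' i).ncard = min ((A i).ncard) (2 * f + 1))
    (hB'card : ∀ i, (B' i).ncard = min ((B i).ncard) (2 * f + 1))
    -- G contains, for each i, the complete bipartite graph between A'_i and B'_i
    (G : SimpleGraph V)
    (hG : ∀ x y : V, x ≠ y →
      (G.Adj x y ↔ ∃ i : Fin m, (x ∈ A' i ∧ y ∈ B' i) ∨ (x ∈ B' i ∧ y ∈ A' i))) :
    G.edgeSet.ncard ≤ (2 * f + 1) ^ 2 * m ∧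
    ∀ F : Set (Sym2 V), F ⊆ G.edgeSet → maxDegLe F f →
      ∀ p q : V, gdist (G.deleteEdges F) p q ≤
        (1 + ε) * gdist ((⊤ : SimpleGraph V).deleteEdges F) p q := by
  classical
  constructor
  · -- edge count
    have hsub : G.edgeSet ⊆ ⋃ i, (fun pr : V × V => Sym2.mk pr.1 pr.2) '' (A' i ×ˢ B' i) := by
      intro e he
      induction e with
      | h x y =>
        rw [SimpleGraph.mem_edgeSet] at he
        have hxy := he.ne
        obtain ⟨i, hi⟩ := (hG x y hxy).mp he
        apply Set.mem_iUnion.mpr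
        refine ⟨i, ?_⟩
        rcases hi with ⟨hx, hy⟩ | ⟨hx, hy⟩
        · exact ⟨(x, y), ⟨hx, hy⟩, rfl⟩
        · exact ⟨(y, x), ⟨hy, hx⟩, Sym2.eq_swap⟩
    calc G.edgeSet.ncard
        ≤ (⋃ i, (fun pr : V × V => Sym2.mk pr.1 pr.2) '' (A' i ×ˢ B' i)).ncard :=
          Set.ncard_le_ncard hsub (Set.toFinite _)
      _ ≤ ∑ i : Fin m, ((fun pr : V × V => Sym2.mk pr.1 pr.2) '' (A' i ×ˢ B' i)).ncard :=
          ncard_iUnion_le' _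
      _ ≤ ∑ _i : Fin m, (2 * f + 1) ^ 2 := by
          apply Finset.sum_le_sum
          intro i _
          calc ((fun pr : V × V => Sym2.mk pr.1 pr.2) '' (A' i ×ˢ B' i)).ncard
              ≤ (A' i ×ˢ B' i).ncard := Set.ncard_image_le (Set.toFinite _)
            _ = (A' i).ncard * (B' i).ncard := ncard_prod' _ _
            _ ≤ (2 * f + 1) * (2 * f + 1) := by
                have := hA'card i; have := hB'card i
                exact Nat.mul_le_mul (by omega) (by omega)
            _ = (2 * f + 1) ^ 2 := (sq _).symm
      _ = (2 * f + 1) ^ 2 * m := by simp [Finset.sum_const, mul_comm]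
  · -- spanner property
    intro F hFsub hFdeg p q
    set H := G.deleteEdges F with hH
    set T := (⊤ : SimpleGraph V).deleteEdges F with hT
    -- core claim
    have core : ∀ n : ℕ, ∀ p q : V,
        (Finset.univ.filter (fun pr : V × V => dist pr.1 pr.2 < dist p q)).card ≤ n →
        p ≠ q → s(p,q) ∉ F → H.Reachable p q ∧ gdist H p q ≤ (1+ε) * dist p q := by
      intro n
      induction n using Nat.strong_induction_on with
      | _ n IHn =>
        intro p q hcard hpq hpqF
        have IH : ∀ x y : V, x ≠ y → s(x,y) ∉ F → dist x y < dist p q →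
            H.Reachable x y ∧ gdist H x y ≤ (1+ε) * dist x y := by
          intro x y hxy hxyF hlt
          have hss : (Finset.univ.filter (fun pr : V × V => dist pr.1 pr.2 < dist x y)) ⊂
              (Finset.univ.filter (fun pr : V × V => dist pr.1 pr.2 < dist p q)) := by
            constructor
            · intro pr hpr
              simp only [Finset.mem_filter, Finset.mem_univ, true_and] at hpr ⊢
              linarith
            · intro hcon
              have : (x, y) ∈ (Finset.univ.filter
                  (fun pr : V × V => dist pr.1 pr.2 < dist p q)) := by
                simp only [Finset.mem_filter, Finset.mem_univ, true_and]; exact hlt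
              have := hcon this
              simp only [Finset.mem_filter, Finset.mem_univ, true_and] at this
              exact lt_irrefl _ this
          have hlt' : (Finset.univ.filter
              (fun pr : V × V => dist pr.1 pr.2 < dist x y)).card < n :=
            lt_of_lt_of_le (Finset.card_lt_card hss) hcard
          exact IHn _ hlt' x y le_rfl hxy hxyF
        obtain ⟨i, hi, -⟩ := hsep p q hpq
        have hadjA : ∀ a ∈ A' i, ∀ b ∈ B' i, a ≠ b → s(a,b) ∉ F → H.Adj a b := by
          intro a ha b hb hab habF
          rw [hH, SimpleGraph.deleteEdges_adj]
          exact ⟨(hG a b hab).mpr ⟨i, Or.inl ⟨ha, hb⟩⟩, habF⟩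
        rcases hi with ⟨hpA, hqB⟩ | ⟨hpB, hqA⟩
        · exact core_step hε hFdeg hpq hpqF (hA'sub i) (hB'sub i) hpA hqB
            (hA'card i) (hB'card i) (hws i) hadjA IH
        · have hadjB : ∀ a ∈ B' i, ∀ b ∈ A' i, a ≠ b → s(a,b) ∉ F → H.Adj a b := by
            intro a ha b hb hab habF
            rw [hH, SimpleGraph.deleteEdges_adj]
            exact ⟨(hG a b hab).mpr ⟨i, Or.inr ⟨ha, hb⟩⟩, habF⟩
          have hws' : ∀ x ∈ B i, ∀ y ∈ A i,
              (2 + 4 / ε) * max (Metric.diam (B i)) (Metric.diam (A i)) ≤ dist x y := by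
            intro x hx y hy
            rw [max_comm, dist_comm]
            exact hws i y hy x hx
          exact core_step hε hFdeg hpq hpqF (hB'sub i) (hA'sub i) hpB hqA
            (hB'card i) (hA'card i) hws' hadjB IH
    have core' : ∀ x y : V, x ≠ y → s(x,y) ∉ F →
        H.Reachable x y ∧ gdist H x y ≤ (1+ε) * dist x y := fun x y hxy hxyF =>
      core _ x y le_rfl hxy hxyF
    -- walk induction in T
    have claim : ∀ (x y : V) (w : T.Walk x y),
        H.Reachable x y ∧ gdist H x y ≤ (1+ε) * wlen w := by
      intro x y w
      induction w with
      | nil =>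
        refine ⟨SimpleGraph.Reachable.refl _, ?_⟩
        rw [wlen_nil, mul_zero]
        exact gdist_self_le
      | @cons u v z h w' ih =>
        rw [hT, SimpleGraph.deleteEdges_adj] at h
        have huv : u ≠ v := h.1.ne
        have hF' : s(u,v) ∉ F := h.2
        obtain ⟨hr1, hg1⟩ := core' u v huv hF'
        obtain ⟨hr2, hg2⟩ := ih
        refine ⟨hr1.trans hr2, ?_⟩
        rw [wlen_cons, mul_add]
        calc gdist H u z ≤ gdist H u v + gdist H v z := gdist_triangle hr1 hr2
          _ ≤ (1+ε) * dist u v + (1+ε) * wlen w' := add_le_add hg1 hg2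
    -- conclude
    by_cases hne : {l : ℝ | ∃ w : T.Walk p q, wlen w = l}.Nonempty
    · obtain ⟨l0, w0, hw0⟩ := hne
      have hg : ∀ l ∈ {l : ℝ | ∃ w : T.Walk p q, wlen w = l},
          gdist H p q / (1+ε) ≤ l := by
        rintro l ⟨w, rfl⟩
        rw [div_le_iff₀ (by linarith)]
        calc gdist H p q ≤ (1+ε) * wlen w := (claim p q w).2
          _ = wlen w * (1+ε) := mul_comm _ _
      have := le_csInf (s := {l : ℝ | ∃ w : T.Walk p q, wlen w = l}) ⟨l0, w0, hw0⟩ hg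
      rw [div_le_iff₀ (by linarith)] at this
      calc gdist H p q ≤ gdist T p q * (1+ε) := this
        _ = (1+ε) * gdist T p q := mul_comm _ _
    · -- no walk in T, hence none in H
      have hHe : {l : ℝ | ∃ w : H.Walk p q, wlen w = l} = ∅ := by
        rw [Set.eq_empty_iff_forall_notMem]
        rintro l ⟨w, rfl⟩
        have hle : H ≤ T := SimpleGraph.deleteEdges_mono le_top
        exact hne ⟨wlen (w.map (SimpleGraph.Hom.ofLE hle)),
          w.map (SimpleGraph.Hom.ofLE hle), rfl⟩
      have hTe : {l : ℝ | ∃ w : T.Walk p q, wlen w = l} = ∅ :=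
        Set.not_nonempty_iff_eq_empty.mp hne
      rw [gdist, gdist, hHe, hTe, Real.sInf_empty, mul_zero]
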